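/- Let G be a group with finite generating set S and Cayley graph Γ, and let g₁, g₂, h₁, h₂ ∈ G. If C̄(g₁) is strongly equivalent to C̄(g₂) and C̄(h₁) is strongly equivalent to C̄(h₂), then m(C̄(g₁)) = m(C̄(g₂)) and n(C̄(g₁), C̄(h₁)) = n(C̄(g₂), C̄(h₂)). -/

import Mathlib

variable {G : Type*} [Group G]

noncomputable def wordLength (S : Set G) (g : G) : ℕ :=
  sInf {n | ∃ w : List G, (∀ x ∈ w, x ∈ S ∪ S⁻¹) ∧ w.length = n ∧ w.prod = g}

def cayley (S : Set G) : SimpleGraph G where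
  Adj g h := g ≠ h ∧ h * g⁻¹ ∈ S ∪ S⁻¹
  symm := by
    constructor
    rintro g h ⟨hne, hmem⟩
    refine ⟨hne.symm, ?_⟩
    have key : g * h⁻¹ = (h * g⁻¹)⁻¹ := by group
    rw [key]
    rcases hmem with h1 | h1
    · exact Or.inr (by simpa [Set.mem_inv] using h1)
    · exact Or.inl (by simpa [Set.mem_inv] using h1)
  loopless := ⟨fun g h => h.1 rfl⟩

def coneSet (S : Set G) (g : G) : Set G :=
  {h | wordLength S h = wordLength S g + (cayley S).dist g h}

lemma self_mem_coneSet (S : Set G) (g : G) : g ∈ coneSet S g := by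
  simp [coneSet]

/-- The cone `C(g)` as a subgraph of the Cayley graph. -/
def coneSubgraph (S : Set G) (g : G) : (cayley S).Subgraph where
  verts := coneSet S g
  Adj a b := a ∈ coneSet S g ∧ b ∈ coneSet S g ∧ (cayley S).Adj a b
  adj_sub h := h.2.2
  edge_vert h := h.1
  symm := by constructor; rintro a b ⟨ha, hb, hab⟩; exact ⟨hb, ha, hab.symm⟩

/-- The extended cone `C̄(g)` as a subgraph of the Cayley graph: the cone together with,
for each vertex `h` of the cone and each tangent edge `{h,k}` of the Cayley graph,
the vertex `k` and the edge `{h,k}`. -/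
def extConeSubgraph (S : Set G) (g : G) : (cayley S).Subgraph where
  verts := coneSet S g ∪
    {k | ∃ h ∈ coneSet S g, (cayley S).Adj h k ∧ wordLength S h = wordLength S k}
  Adj a b := (cayley S).Adj a b ∧
    ((a ∈ coneSet S g ∧ b ∈ coneSet S g) ∨
      (wordLength S a = wordLength S b ∧ (a ∈ coneSet S g ∨ b ∈ coneSet S g)))
  adj_sub h := h.1
  edge_vert := by
    rintro a b ⟨hadj, hc | ⟨ht, hc⟩⟩
    · exact Or.inl hc.1
    · rcases hc with hc | hc
      · exact Or.inl hc
      · exact Or.inr ⟨b, hc, hadj.symm, ht.symm⟩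
  symm := by
    constructor
    rintro a b ⟨hadj, hc | ⟨ht, hc⟩⟩
    · exact ⟨hadj.symm, Or.inl ⟨hc.2, hc.1⟩⟩
    · exact ⟨hadj.symm, Or.inr ⟨ht.symm, hc.symm⟩⟩

lemma self_mem_extCone (S : Set G) (g : G) : g ∈ (extConeSubgraph S g).verts :=
  Set.mem_union_left _ (self_mem_coneSet S g)

/-- Strong equivalence of extended cones: a graph isomorphism of the extended cones sending
root to root and cone onto cone. -/
noncomputable def StrongEquiv (S : Set G) (g h : G) : Prop :=
  ∃ T : (extConeSubgraph S g).coe ≃g (extConeSubgraph S h).coe,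
    ((T ⟨g, self_mem_extCone S g⟩ : (extConeSubgraph S h).verts) : G) = h ∧
    ∀ x : (extConeSubgraph S g).verts,
      ((x : G) ∈ coneSet S g ↔ ((T x : (extConeSubgraph S h).verts) : G) ∈ coneSet S h)

/-- Weak equivalence of cones: a root-preserving graph isomorphism of the cones. -/
noncomputable def WeakEquiv (S : Set G) (g h : G) : Prop :=
  ∃ T : (cayley S).induce (coneSet S g) ≃g (cayley S).induce (coneSet S h),
    ((T ⟨g, self_mem_coneSet S g⟩ : coneSet S h) : G) = h

/-- `m(C̄(g))`: the number of norm decreasing edges at `g`. -/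
noncomputable def mval (S : Set G) (g : G) : ℕ :=
  Set.ncard {h | (cayley S).Adj g h ∧ wordLength S g = wordLength S h + 1}

/-- `n(C̄(g),C̄(h))`: the number of norm increasing edges `(g,h')` at `g` with
`C̄(h')` strongly equivalent to `C̄(h)`. -/
noncomputable def nval (S : Set G) (g h : G) : ℕ :=
  Set.ncard {h' | (cayley S).Adj g h' ∧ wordLength S h' = wordLength S g + 1 ∧
    StrongEquiv S h' h}

section Basics

variable {S : Set G}

lemma exists_word (hgen : Subgroup.closure S = ⊤) (g : G) :
    ∃ w : List G, (∀ x ∈ w, x ∈ S ∪ S⁻¹) ∧ w.prod = g := by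
  have hg : g ∈ Subgroup.closure S := by rw [hgen]; trivial
  induction hg using Subgroup.closure_induction with
  | mem x hx => exact ⟨[x], by simp [hx], by simp⟩
  | one => exact ⟨[], by simp, by simp⟩
  | mul x y hx hy ihx ihy =>
      obtain ⟨w1, h1, p1⟩ := ihx
      obtain ⟨w2, h2, p2⟩ := ihy
      refine ⟨w1 ++ w2, ?_, by simp [p1, p2]⟩
      intro z hz
      rcases List.mem_append.mp hz with h | h
      · exact h1 z h
      · exact h2 z h
  | inv x hx ihx =>
      obtain ⟨w, h1, p1⟩ := ihx
      refine ⟨(w.map fun x => x⁻¹).reverse, ?_, by rw [← List.prod_inv_reverse, p1]⟩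
      intro z hz
      simp only [List.mem_reverse, List.mem_map] at hz
      obtain ⟨a, ha, rfl⟩ := hz
      rcases h1 a ha with h | h
      · exact Or.inr (by simpa using h)
      · exact Or.inl (by simpa using h)

lemma wordSet_nonempty (hgen : Subgroup.closure S = ⊤) (g : G) :
    {n | ∃ w : List G, (∀ x ∈ w, x ∈ S ∪ S⁻¹) ∧ w.length = n ∧ w.prod = g}.Nonempty := by
  obtain ⟨w, h1, h2⟩ := exists_word hgen g
  exact ⟨w.length, w, h1, rfl, h2⟩

lemma exists_word_length (hgen : Subgroup.closure S = ⊤) (g : G) :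
    ∃ w : List G, (∀ x ∈ w, x ∈ S ∪ S⁻¹) ∧ w.length = wordLength S g ∧ w.prod = g :=
  Nat.sInf_mem (wordSet_nonempty hgen g)

lemma wordLength_le {w : List G} (h : ∀ x ∈ w, x ∈ S ∪ S⁻¹) {g : G} (hp : w.prod = g) :
    wordLength S g ≤ w.length :=
  Nat.sInf_le ⟨w, h, rfl, hp⟩

lemma wordLength_le_adj (hgen : Subgroup.closure S = ⊤) {a b : G} (h : (cayley S).Adj a b) :
    wordLength S b ≤ wordLength S a + 1 := by
  obtain ⟨w, h1, h2, h3⟩ := exists_word_length hgen a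
  have : wordLength S b ≤ ((b * a⁻¹) :: w).length := by
    refine wordLength_le ?_ ?_
    · intro x hx
      rcases List.mem_cons.mp hx with rfl | hx
      · exact h.2
      · exact h1 x hx
    · simp [h3]
  simpa [h2, Nat.add_comm] using this

lemma reachable_word (w : List G) (hw : ∀ x ∈ w, x ∈ S ∪ S⁻¹) (a : G) :
    (cayley S).Reachable a (w.prod * a) := by
  induction w with
  | nil => simpa using SimpleGraph.Reachable.refl a
  | cons x t ih =>
      have h1 : (cayley S).Reachable a (t.prod * a) := ih (fun z hz => hw z (List.mem_cons_of_mem _ hz))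
      rcases eq_or_ne (x * (t.prod * a)) (t.prod * a) with he | he
      · rw [List.prod_cons, mul_assoc, he]; exact h1
      · refine h1.trans (SimpleGraph.Adj.reachable ?_)
        rw [List.prod_cons, mul_assoc]
        refine ⟨he.symm, ?_⟩
        have hx' : x * (t.prod * a) * (t.prod * a)⁻¹ = x := by group
        rw [hx']
        exact hw x (List.mem_cons_self (a := x) (l := t))

lemma cayley_connected (hgen : Subgroup.closure S = ⊤) : (cayley S).Connected := by
  rw [SimpleGraph.connected_iff]
  refine ⟨?_, ⟨1⟩⟩
  intro a b
  obtain ⟨w, h1, h2⟩ := exists_word hgen (b * a⁻¹)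
  have := reachable_word w h1 a
  rwa [h2, inv_mul_cancel_right] at this

lemma wordLength_le_walk (hgen : Subgroup.closure S = ⊤) {a b : G} (p : (cayley S).Walk a b) :
    wordLength S b ≤ wordLength S a + p.length := by
  induction p with
  | nil => simp
  | @cons u v w h q ih =>
      rw [SimpleGraph.Walk.length_cons]
      have h2 := wordLength_le_adj hgen h
      omega

lemma wordLength_le_dist (hgen : Subgroup.closure S = ⊤) (a b : G) :
    wordLength S b ≤ wordLength S a + (cayley S).dist a b := by
  obtain ⟨p, hp⟩ := ((cayley_connected hgen) a b).exists_walk_length_eq_dist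
  simpa [hp] using wordLength_le_walk hgen p

end Basics

section ConeLemmas

variable {S : Set G}

lemma dist_adj {a b : G} (h : (cayley S).Adj a b) : (cayley S).dist a b = 1 :=
  SimpleGraph.dist_eq_one_iff_adj.mpr h

lemma adj_incr_mem_cone {g k : G} (h : (cayley S).Adj g k)
    (hw : wordLength S k = wordLength S g + 1) : k ∈ coneSet S g := by
  simp only [coneSet, Set.mem_setOf_eq, dist_adj h]
  exact hw

lemma cone_adj_wl {g k : G} (hk : k ∈ coneSet S g) (h : (cayley S).Adj g k) :
    wordLength S k = wordLength S g + 1 := by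
  have := hk
  simp only [coneSet, Set.mem_setOf_eq, dist_adj h] at this
  exact this

lemma cone_mono (hgen : Subgroup.closure S = ⊤) {g h : G} (hh : h ∈ coneSet S g) :
    coneSet S h ⊆ coneSet S g := by
  intro m hm
  have t := (cayley_connected hgen).dist_triangle (u := g) (v := h) (w := m)
  have l := wordLength_le_dist hgen g m
  have e1 : wordLength S m = wordLength S h + (cayley S).dist h m := hm
  have e2 : wordLength S h = wordLength S g + (cayley S).dist g h := hh
  show wordLength S m = wordLength S g + (cayley S).dist g m
  omega

/-- Lengths of walks from `a` to `b` supported inside the cone of `g`. -/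
def coneD (S : Set G) (g a b : G) : Set ℕ :=
  {n | ∃ p : (cayley S).Walk a b, p.length = n ∧ ∀ x ∈ p.support, x ∈ coneSet S g}

noncomputable def cdist (S : Set G) (g a b : G) : ℕ := sInf (coneD S g a b)

lemma dist_le_coneD {g a b : G} {n : ℕ} (hn : n ∈ coneD S g a b) :
    (cayley S).dist a b ≤ n := by
  obtain ⟨p, rfl, -⟩ := hn
  exact SimpleGraph.dist_le p

lemma cone_geodesic (hgen : Subgroup.closure S = ⊤) (g : G) :
    ∀ (n : ℕ) (k : G), k ∈ coneSet S g → (cayley S).dist g k = n → n ∈ coneD S g g k := by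
  intro n
  induction n with
  | zero =>
      intro k hk hd
      have hgk : g = k := ((cayley_connected hgen) g k).dist_eq_zero_iff.mp hd
      subst hgk
      refine ⟨SimpleGraph.Walk.nil, rfl, ?_⟩
      intro x hx
      simp only [SimpleGraph.Walk.support_nil, List.mem_singleton] at hx
      subst hx
      exact self_mem_coneSet S _
  | succ n ih =>
      intro k hk hd
      obtain ⟨p, hp⟩ := ((cayley_connected hgen) k g).exists_walk_length_eq_dist
      have hp' : p.length = n + 1 := by
        rw [hp, SimpleGraph.dist_comm, hd]
      cases p with
      | nil => simp at hp'
      | @cons u v w hadj q =>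
          have hq : q.length = n := by simpa using hp'
          have hdv : (cayley S).dist v g ≤ n := hq ▸ SimpleGraph.dist_le q
          have hdv' : (cayley S).dist g v ≤ n := by rwa [SimpleGraph.dist_comm]
          have hd1 : (cayley S).dist v k = 1 := dist_adj hadj.symm
          have tri := (cayley_connected hgen).dist_triangle (u := g) (v := v) (w := k)
          have hveq : (cayley S).dist g v = n := by omega
          have l1 : wordLength S v ≤ wordLength S g + n :=
            hveq ▸ wordLength_le_dist hgen g v
          have l2 : wordLength S k ≤ wordLength S v + 1 :=
            wordLength_le_adj hgen hadj.symm
          have ek : wordLength S k = wordLength S g + (n + 1) := hd ▸ hk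
          have hv : v ∈ coneSet S g := by
            show wordLength S v = wordLength S g + (cayley S).dist g v
            omega
          obtain ⟨p', hl, hs⟩ := ih v hv hveq
          refine ⟨p'.concat hadj.symm, ?_, ?_⟩
          · simp [SimpleGraph.Walk.length_concat, hl]
          · intro x hx
            rw [SimpleGraph.Walk.support_concat] at hx
            simp only [List.concat_eq_append, List.mem_append, List.mem_singleton] at hx
            rcases hx with hx | hx
            · exact hs x hx
            · subst hx; exact hk

lemma cdist_root (hgen : Subgroup.closure S = ⊤) {g k : G} (hk : k ∈ coneSet S g) :
    cdist S g g k = (cayley S).dist g k := by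
  have hmem := cone_geodesic hgen g _ k hk rfl
  refine le_antisymm (Nat.sInf_le hmem) (le_csInf ⟨_, hmem⟩ ?_)
  intro n hn
  exact dist_le_coneD hn

lemma mem_cone_char (hgen : Subgroup.closure S = ⊤) {g h' : G}
    (hadj : (cayley S).Adj g h') (hwl : wordLength S h' = wordLength S g + 1) (k : G) :
    k ∈ coneSet S h' ↔ k ∈ coneSet S g ∧
      ∃ n, n + 1 = cdist S g g k ∧ n ∈ coneD S g h' k := by
  have hh' : h' ∈ coneSet S g := adj_incr_mem_cone hadj hwl
  constructor
  · intro hk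
    have hkg : k ∈ coneSet S g := cone_mono hgen hh' hk
    have e1 : wordLength S k = wordLength S h' + (cayley S).dist h' k := hk
    have e2 : wordLength S k = wordLength S g + (cayley S).dist g k := hkg
    refine ⟨hkg, (cayley S).dist h' k, ?_, ?_⟩
    · rw [cdist_root hgen hkg]; omega
    · obtain ⟨p, hl, hs⟩ := cone_geodesic hgen h' _ k hk rfl
      exact ⟨p, hl, fun x hx => cone_mono hgen hh' (hs x hx)⟩
  · rintro ⟨hkg, n, hn1, hn2⟩
    rw [cdist_root hgen hkg] at hn1
    have hdn : (cayley S).dist h' k ≤ n := dist_le_coneD hn2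
    have l : wordLength S k ≤ wordLength S h' + (cayley S).dist h' k :=
      wordLength_le_dist hgen h' k
    have e2 : wordLength S k = wordLength S g + (cayley S).dist g k := hkg
    show wordLength S k = wordLength S h' + (cayley S).dist h' k
    omega

lemma tangent_char (hgen : Subgroup.closure S = ⊤) {g a b : G}
    (h : (extConeSubgraph S g).Adj a b) :
    wordLength S a = wordLength S b ↔
      (a ∈ coneSet S g ∧ b ∈ coneSet S g → cdist S g g a = cdist S g g b) := by
  by_cases hc : a ∈ coneSet S g ∧ b ∈ coneSet S g
  · obtain ⟨ha, hb⟩ := hc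
    rw [cdist_root hgen ha, cdist_root hgen hb]
    have e1 : wordLength S a = wordLength S g + (cayley S).dist g a := ha
    have e2 : wordLength S b = wordLength S g + (cayley S).dist g b := hb
    constructor
    · intro hw _; omega
    · intro hw; have := hw ⟨ha, hb⟩; omega
  · have hw : wordLength S a = wordLength S b := by
      rcases h.2 with h1 | h1
      · exact absurd h1 hc
      · exact h1.1
    simp [hc, hw]

lemma extAdj_char {g h' : G} (hgen : Subgroup.closure S = ⊤) (hh' : h' ∈ coneSet S g)
    (x y : G) :
    (extConeSubgraph S h').Adj x y ↔ (extConeSubgraph S g).Adj x y ∧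
      ((x ∈ coneSet S h' ∧ y ∈ coneSet S h') ∨
        (wordLength S x = wordLength S y ∧ (x ∈ coneSet S h' ∨ y ∈ coneSet S h'))) := by
  have hsub := cone_mono hgen hh'
  constructor
  · rintro ⟨hadj, hcl⟩
    refine ⟨⟨hadj, ?_⟩, hcl⟩
    rcases hcl with ⟨h1, h2⟩ | ⟨ht, h1⟩
    · exact Or.inl ⟨hsub h1, hsub h2⟩
    · rcases h1 with h1 | h1
      · exact Or.inr ⟨ht, Or.inl (hsub h1)⟩
      · exact Or.inr ⟨ht, Or.inr (hsub h1)⟩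
  · rintro ⟨⟨hadj, -⟩, hcl⟩
    exact ⟨hadj, hcl⟩

lemma verts_char {g h' : G} (hgen : Subgroup.closure S = ⊤) (hh' : h' ∈ coneSet S g)
    (x : G) :
    x ∈ (extConeSubgraph S h').verts ↔ x ∈ coneSet S h' ∨
      ∃ k, k ∈ (extConeSubgraph S g).verts ∧ k ∈ coneSet S h' ∧
        (extConeSubgraph S g).Adj k x ∧ wordLength S k = wordLength S x := by
  have hsub := cone_mono hgen hh'
  constructor
  · rintro (hx | ⟨k, hk, hadj, hw⟩)
    · exact Or.inl hx
    · exact Or.inr ⟨k, Or.inl (hsub hk), hk,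
        ⟨hadj, Or.inr ⟨hw, Or.inl (hsub hk)⟩⟩, hw⟩
  · rintro (hx | ⟨k, -, hk, ⟨hadj, -⟩, hw⟩)
    · exact Or.inl hx
    · exact Or.inr ⟨k, hk, hadj, hw⟩

lemma extCone_verts_mono (hgen : Subgroup.closure S = ⊤) {g h' : G}
    (hh' : h' ∈ coneSet S g) :
    (extConeSubgraph S h').verts ⊆ (extConeSubgraph S g).verts := by
  have hsub := cone_mono hgen hh'
  rintro x (hx | ⟨k, hk, hadj, hw⟩)
  · exact Or.inl (hsub hx)
  · exact Or.inr ⟨k, hsub hk, hadj, hw⟩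

end ConeLemmas

/-- Bundled strong equivalence data. -/
structure SE (S : Set G) (g₁ g₂ : G) where
  T : (extConeSubgraph S g₁).coe ≃g (extConeSubgraph S g₂).coe
  root : ((T ⟨g₁, self_mem_extCone S g₁⟩ : (extConeSubgraph S g₂).verts) : G) = g₂
  cone : ∀ x : (extConeSubgraph S g₁).verts,
      ((x : G) ∈ coneSet S g₁ ↔ ((T x : (extConeSubgraph S g₂).verts) : G) ∈ coneSet S g₂)

namespace SE

variable {S : Set G} {g₁ g₂ g₃ : G}

noncomputable def f (e : SE S g₁ g₂) (a : G) (ha : a ∈ (extConeSubgraph S g₁).verts) : G :=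
  ((e.T ⟨a, ha⟩ : (extConeSubgraph S g₂).verts) : G)

lemma f_mem (e : SE S g₁ g₂) (a : G) (ha : a ∈ (extConeSubgraph S g₁).verts) :
    e.f a ha ∈ (extConeSubgraph S g₂).verts :=
  (e.T ⟨a, ha⟩).2

lemma root' (e : SE S g₁ g₂) (h : g₁ ∈ (extConeSubgraph S g₁).verts) : e.f g₁ h = g₂ :=
  e.root

noncomputable def symm (e : SE S g₁ g₂) : SE S g₂ g₁ where
  T := e.T.symm
  root := by
    have h1 : e.T ⟨g₁, self_mem_extCone S g₁⟩ = ⟨g₂, self_mem_extCone S g₂⟩ :=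
      Subtype.ext e.root
    have h2 : e.T.symm ⟨g₂, self_mem_extCone S g₂⟩ = ⟨g₁, self_mem_extCone S g₁⟩ := by
      rw [← h1]
      exact e.T.symm_apply_apply _
    rw [h2]
  cone := by
    intro y
    have := e.cone (e.T.symm y)
    rw [e.T.apply_symm_apply] at this
    exact this.symm

lemma f_symm_f (e : SE S g₁ g₂) {a : G} (ha : a ∈ (extConeSubgraph S g₁).verts)
    (hb : e.f a ha ∈ (extConeSubgraph S g₂).verts) : e.symm.f (e.f a ha) hb = a := by
  show ((e.T.symm ⟨((e.T ⟨a, ha⟩ : (extConeSubgraph S g₂).verts) : G), hb⟩ :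
    (extConeSubgraph S g₁).verts) : G) = a
  have h1 : (⟨((e.T ⟨a, ha⟩ : (extConeSubgraph S g₂).verts) : G), hb⟩ :
      (extConeSubgraph S g₂).verts) = e.T ⟨a, ha⟩ := rfl
  rw [h1, e.T.symm_apply_apply]

lemma f_f_symm (e : SE S g₁ g₂) {a : G} (ha : a ∈ (extConeSubgraph S g₂).verts)
    (hb : e.symm.f a ha ∈ (extConeSubgraph S g₁).verts) : e.f (e.symm.f a ha) hb = a := by
  show ((e.T ⟨((e.T.symm ⟨a, ha⟩ : (extConeSubgraph S g₁).verts) : G), hb⟩ :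
    (extConeSubgraph S g₂).verts) : G) = a
  have h1 : (⟨((e.T.symm ⟨a, ha⟩ : (extConeSubgraph S g₁).verts) : G), hb⟩ :
      (extConeSubgraph S g₁).verts) = e.T.symm ⟨a, ha⟩ := rfl
  rw [h1, e.T.apply_symm_apply]

lemma adj_iff (e : SE S g₁ g₂) {a b : G} (ha : a ∈ (extConeSubgraph S g₁).verts)
    (hb : b ∈ (extConeSubgraph S g₁).verts) :
    (extConeSubgraph S g₁).Adj a b ↔ (extConeSubgraph S g₂).Adj (e.f a ha) (e.f b hb) := by
  exact ⟨fun h => e.T.map_adj_iff.mpr h, fun h => e.T.map_adj_iff.mp h⟩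

lemma cone_iff (e : SE S g₁ g₂) {a : G} (ha : a ∈ (extConeSubgraph S g₁).verts) :
    a ∈ coneSet S g₁ ↔ e.f a ha ∈ coneSet S g₂ :=
  e.cone ⟨a, ha⟩

lemma walk_map (e : SE S g₁ g₂) {a b : G} (p : (cayley S).Walk a b)
    (hs : ∀ x ∈ p.support, x ∈ coneSet S g₁)
    (ha : a ∈ (extConeSubgraph S g₁).verts) (hb : b ∈ (extConeSubgraph S g₁).verts) :
    ∃ q : (cayley S).Walk (e.f a ha) (e.f b hb), q.length = p.length ∧
      ∀ x ∈ q.support, x ∈ coneSet S g₂ := by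
  induction p with
  | nil =>
      refine ⟨SimpleGraph.Walk.nil, rfl, ?_⟩
      intro x hx
      simp only [SimpleGraph.Walk.support_nil, List.mem_singleton] at hx
      subst hx
      exact (e.cone_iff ha).mp (hs _ (by simp))
  | @cons u v w hadj q ih =>
      have hu : u ∈ coneSet S g₁ := hs u (by simp)
      have hv : v ∈ coneSet S g₁ := hs v (by
        rw [SimpleGraph.Walk.support_cons]
        exact List.mem_cons_of_mem _ q.start_mem_support)
      have hv' : v ∈ (extConeSubgraph S g₁).verts := Or.inl hv
      have hadj1 : (extConeSubgraph S g₁).Adj u v := ⟨hadj, Or.inl ⟨hu, hv⟩⟩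
      have hadj2 : (extConeSubgraph S g₂).Adj (e.f u ha) (e.f v hv') :=
        (e.adj_iff ha hv').mp hadj1
      obtain ⟨q', hl, hq⟩ := ih (fun x hx => hs x (by
        rw [SimpleGraph.Walk.support_cons]; exact List.mem_cons_of_mem _ hx)) hv' hb
      refine ⟨SimpleGraph.Walk.cons hadj2.adj_sub q', by simp [hl], ?_⟩
      intro x hx
      rw [SimpleGraph.Walk.support_cons] at hx
      rcases List.mem_cons.mp hx with rfl | hx
      · exact (e.cone_iff ha).mp hu
      · exact hq x hx

lemma coneD_sub (e : SE S g₁ g₂) {a b : G} (ha : a ∈ (extConeSubgraph S g₁).verts)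
    (hb : b ∈ (extConeSubgraph S g₁).verts) :
    coneD S g₁ a b ⊆ coneD S g₂ (e.f a ha) (e.f b hb) := by
  rintro n ⟨p, rfl, hs⟩
  obtain ⟨q, hl, hq⟩ := e.walk_map p hs ha hb
  exact ⟨q, hl, hq⟩

lemma coneD_eq (e : SE S g₁ g₂) {a b : G} (ha : a ∈ (extConeSubgraph S g₁).verts)
    (hb : b ∈ (extConeSubgraph S g₁).verts) :
    coneD S g₂ (e.f a ha) (e.f b hb) = coneD S g₁ a b := by
  refine Set.Subset.antisymm ?_ (e.coneD_sub ha hb)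
  intro n hn
  have h2 := e.symm.coneD_sub (e.f_mem a ha) (e.f_mem b hb) hn
  rwa [e.f_symm_f, e.f_symm_f] at h2

lemma cdist_eq (e : SE S g₁ g₂) {a b : G} (ha : a ∈ (extConeSubgraph S g₁).verts)
    (hb : b ∈ (extConeSubgraph S g₁).verts) :
    cdist S g₂ (e.f a ha) (e.f b hb) = cdist S g₁ a b := by
  rw [cdist, cdist, e.coneD_eq ha hb]

noncomputable def trans (e : SE S g₁ g₂) (e' : SE S g₂ g₃) : SE S g₁ g₃ where
  T := e.T.trans e'.T
  root := by
    have h1 : e.T ⟨g₁, self_mem_extCone S g₁⟩ = ⟨g₂, self_mem_extCone S g₂⟩ :=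
      Subtype.ext e.root
    show ((e'.T (e.T ⟨g₁, self_mem_extCone S g₁⟩) : (extConeSubgraph S g₃).verts) : G) = g₃
    rw [h1]
    exact e'.root
  cone := fun x => (e.cone x).trans (e'.cone (e.T x))

end SE


section Restrict

variable {S : Set G} {g₁ g₂ : G}

lemma se_restrict (hgen : Subgroup.closure S = ⊤) (e : SE S g₁ g₂) {h' : G}
    (hadj : (cayley S).Adj g₁ h') (hwl : wordLength S h' = wordLength S g₁ + 1) :
    Nonempty (SE S h' (e.f h' (Or.inl (adj_incr_mem_cone hadj hwl)))) := by
  have hh'c : h' ∈ coneSet S g₁ := adj_incr_mem_cone hadj hwl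
  have hh'v : h' ∈ (extConeSubgraph S g₁).verts := Or.inl hh'c
  set h₂ := e.f h' hh'v with hh₂def
  -- basic facts about h₂
  have hadj2 : (cayley S).Adj g₂ h₂ := by
    have he1 : (extConeSubgraph S g₁).Adj g₁ h' :=
      ⟨hadj, Or.inl ⟨self_mem_coneSet S g₁, hh'c⟩⟩
    have he2 := (e.adj_iff (self_mem_extCone S g₁) hh'v).mp he1
    rw [e.root'] at he2
    exact he2.adj_sub
  have hc2 : h₂ ∈ coneSet S g₂ := (e.cone_iff hh'v).mp hh'c
  have hwl2 : wordLength S h₂ = wordLength S g₂ + 1 := cone_adj_wl hc2 hadj2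
  -- root-based cdist transfer
  have hcd1 : ∀ (x : G) (hx : x ∈ (extConeSubgraph S g₁).verts),
      cdist S g₂ g₂ (e.f x hx) = cdist S g₁ g₁ x := by
    intro x hx
    have h1 := e.cdist_eq (self_mem_extCone S g₁) hx
    rwa [e.root'] at h1
  -- cone membership transfer
  have Cmem : ∀ (x : G) (hx : x ∈ (extConeSubgraph S g₁).verts),
      (x ∈ coneSet S h' ↔ e.f x hx ∈ coneSet S h₂) := by
    intro x hx
    rw [mem_cone_char hgen hadj hwl x, mem_cone_char hgen hadj2 hwl2 (e.f x hx)]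
    rw [hcd1 x hx, e.coneD_eq hh'v hx, ← e.cone_iff hx]
  -- tangency transfer
  have Tg : ∀ (x y : G) (hx : x ∈ (extConeSubgraph S g₁).verts)
      (hy : y ∈ (extConeSubgraph S g₁).verts), (extConeSubgraph S g₁).Adj x y →
      (wordLength S x = wordLength S y ↔
        wordLength S (e.f x hx) = wordLength S (e.f y hy)) := by
    intro x y hx hy hA
    rw [tangent_char hgen hA, tangent_char hgen ((e.adj_iff hx hy).mp hA)]
    rw [hcd1 x hx, hcd1 y hy, ← e.cone_iff hx, ← e.cone_iff hy]
  -- vertex set transfer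
  have Vmem : ∀ (x : G) (hx : x ∈ (extConeSubgraph S g₁).verts),
      (x ∈ (extConeSubgraph S h').verts ↔ e.f x hx ∈ (extConeSubgraph S h₂).verts) := by
    intro x hx
    rw [verts_char hgen hh'c x, verts_char hgen hc2 (e.f x hx)]
    constructor
    · rintro (h1 | ⟨k, hkv, hkc, hkadj, hkw⟩)
      · exact Or.inl ((Cmem x hx).mp h1)
      · exact Or.inr ⟨e.f k hkv, e.f_mem k hkv, (Cmem k hkv).mp hkc,
          (e.adj_iff hkv hx).mp hkadj, (Tg k x hkv hx hkadj).mp hkw⟩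
    · rintro (h1 | ⟨k₂, hk₂v, hk₂c, hk₂adj, hk₂w⟩)
      · exact Or.inl ((Cmem x hx).mpr h1)
      · have hkv : e.symm.f k₂ hk₂v ∈ (extConeSubgraph S g₁).verts :=
          e.symm.f_mem k₂ hk₂v
        have hkk : e.f (e.symm.f k₂ hk₂v) hkv = k₂ := e.f_f_symm hk₂v hkv
        rw [← hkk] at hk₂c hk₂adj hk₂w
        exact Or.inr ⟨e.symm.f k₂ hk₂v, hkv, (Cmem _ hkv).mpr hk₂c,
          (e.adj_iff hkv hx).mpr hk₂adj, (Tg _ x hkv hx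
            ((e.adj_iff hkv hx).mpr hk₂adj)).mpr hk₂w⟩
  -- adjacency transfer
  have AdjT : ∀ (x y : G) (hx : x ∈ (extConeSubgraph S g₁).verts)
      (hy : y ∈ (extConeSubgraph S g₁).verts),
      ((extConeSubgraph S h').Adj x y ↔
        (extConeSubgraph S h₂).Adj (e.f x hx) (e.f y hy)) := by
    intro x y hx hy
    rw [extAdj_char hgen hh'c x y, extAdj_char hgen hc2 (e.f x hx) (e.f y hy)]
    constructor
    · rintro ⟨hA, hcl⟩
      refine ⟨(e.adj_iff hx hy).mp hA, ?_⟩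
      rcases hcl with ⟨h1, h2⟩ | ⟨ht, h1⟩
      · exact Or.inl ⟨(Cmem x hx).mp h1, (Cmem y hy).mp h2⟩
      · refine Or.inr ⟨(Tg x y hx hy hA).mp ht, ?_⟩
        rcases h1 with h1 | h1
        · exact Or.inl ((Cmem x hx).mp h1)
        · exact Or.inr ((Cmem y hy).mp h1)
    · rintro ⟨hA2, hcl⟩
      have hA : (extConeSubgraph S g₁).Adj x y := (e.adj_iff hx hy).mpr hA2
      refine ⟨hA, ?_⟩
      rcases hcl with ⟨h1, h2⟩ | ⟨ht, h1⟩
      · exact Or.inl ⟨(Cmem x hx).mpr h1, (Cmem y hy).mpr h2⟩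
      · refine Or.inr ⟨(Tg x y hx hy hA).mpr ht, ?_⟩
        rcases h1 with h1 | h1
        · exact Or.inl ((Cmem x hx).mpr h1)
        · exact Or.inr ((Cmem y hy).mpr h1)
  -- build the isomorphism
  have hsub1 : (extConeSubgraph S h').verts ⊆ (extConeSubgraph S g₁).verts :=
    extCone_verts_mono hgen hh'c
  have hsub2 : (extConeSubgraph S h₂).verts ⊆ (extConeSubgraph S g₂).verts :=
    extCone_verts_mono hgen hc2
  have hsub2' : ∀ y : (extConeSubgraph S h₂).verts,
      (y : G) ∈ (extConeSubgraph S g₂).verts := fun y => hsub2 y.2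
  have hinvmem : ∀ y : (extConeSubgraph S h₂).verts,
      e.symm.f (y : G) (hsub2' y) ∈ (extConeSubgraph S h').verts := by
    intro y
    have hv1 : e.symm.f (y : G) (hsub2' y) ∈ (extConeSubgraph S g₁).verts :=
      e.symm.f_mem _ _
    refine (Vmem _ hv1).mpr ?_
    rw [e.f_f_symm (hsub2' y) hv1]
    exact y.2
  let E : (extConeSubgraph S h').verts ≃ (extConeSubgraph S h₂).verts :=
    { toFun := fun x => ⟨e.f (x : G) (hsub1 x.2), (Vmem _ (hsub1 x.2)).mp x.2⟩
      invFun := fun y => ⟨e.symm.f (y : G) (hsub2' y), hinvmem y⟩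
      left_inv := by
        intro x
        apply Subtype.ext
        exact e.f_symm_f (hsub1 x.2) _
      right_inv := by
        intro y
        apply Subtype.ext
        exact e.f_f_symm (hsub2' y) _ }
  refine ⟨{ T := ⟨E, ?_⟩, root := ?_, cone := ?_ }⟩
  · intro a b
    exact (AdjT (a : G) (b : G) (hsub1 a.2) (hsub1 b.2)).symm
  · rfl
  · intro x
    exact Cmem (x : G) (hsub1 x.2)

end Restrict

section Counting

variable {S : Set G} {g₁ g₂ : G}

lemma strongEquiv_nonempty {g h : G} : StrongEquiv S g h ↔ Nonempty (SE S g h) :=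
  ⟨fun ⟨T, h1, h2⟩ => ⟨⟨T, h1, h2⟩⟩, fun ⟨e⟩ => ⟨e.T, e.root, e.cone⟩⟩

/-- A total function realizing `e.f`. -/
noncomputable def SE.F (e : SE S g₁ g₂) : G → G := fun x =>
  haveI := Classical.dec (x ∈ (extConeSubgraph S g₁).verts)
  if hx : x ∈ (extConeSubgraph S g₁).verts then e.f x hx else x

lemma SE.F_eq (e : SE S g₁ g₂) {x : G} (hx : x ∈ (extConeSubgraph S g₁).verts) :
    e.F x = e.f x hx := by
  unfold SE.F
  rw [dif_pos hx]

lemma SE.f_inj (e : SE S g₁ g₂) {x y : G} (hx : x ∈ (extConeSubgraph S g₁).verts)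
    (hy : y ∈ (extConeSubgraph S g₁).verts) (h : e.f x hx = e.f y hy) : x = y := by
  have h1 : e.T ⟨x, hx⟩ = e.T ⟨y, hy⟩ := Subtype.ext h
  have h2 := e.T.toEquiv.injective h1
  exact congrArg Subtype.val h2

lemma SE.F_injOn (e : SE S g₁ g₂) {A : Set G} (hA : A ⊆ (extConeSubgraph S g₁).verts) :
    Set.InjOn e.F A := by
  intro x hx y hy hxy
  rw [e.F_eq (hA hx), e.F_eq (hA hy)] at hxy
  exact e.f_inj _ _ hxy

lemma SE.F_F_symm (e : SE S g₁ g₂) {x : G} (hx : x ∈ (extConeSubgraph S g₂).verts) :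
    e.F (e.symm.F x) = x := by
  rw [e.symm.F_eq hx, e.F_eq (e.symm.f_mem x hx), e.f_f_symm]

lemma nbr_finite (hS : S.Finite) (g : G) : {h | (cayley S).Adj g h}.Finite := by
  refine Set.Finite.subset (Set.Finite.image (· * g)
    (hS.union (hS.preimage (Set.injOn_of_injective inv_injective)))) ?_
  intro h hh
  exact ⟨h * g⁻¹, hh.2, by group⟩

lemma nbr_eq_image (g : G) :
    {h | (cayley S).Adj g h} = (· * g) '' ((S ∪ S⁻¹) \ {1}) := by
  ext h
  constructor
  · intro hh
    refine ⟨h * g⁻¹, ⟨hh.2, ?_⟩, by group⟩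
    simp only [Set.mem_singleton_iff]
    intro he
    apply hh.1
    have hg : h = (h * g⁻¹) * g := by group
    rw [hg, he, one_mul]
  · rintro ⟨x, ⟨hx, hx1⟩, rfl⟩
    simp only [Set.mem_singleton_iff] at hx1
    refine ⟨?_, by simpa using hx⟩
    intro he
    exact hx1 (mul_right_cancel (b := g) (show x * g = 1 * g by rw [one_mul]; exact he.symm))

lemma nbr_ncard (g : G) :
    {h | (cayley S).Adj g h}.ncard = ((S ∪ S⁻¹) \ {1} : Set G).ncard := by
  rw [nbr_eq_image g, Set.ncard_image_of_injective _ (mul_left_injective g)]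

lemma TI_eq (_hgen : Subgroup.closure S = ⊤) (g : G) :
    {h | (extConeSubgraph S g).Adj g h} = {h | (cayley S).Adj g h ∧
      (wordLength S h = wordLength S g + 1 ∨ wordLength S h = wordLength S g)} := by
  ext h
  constructor
  · rintro ⟨hadj, hcl⟩
    refine ⟨hadj, ?_⟩
    rcases hcl with ⟨-, hc⟩ | ⟨ht, -⟩
    · exact Or.inl (cone_adj_wl hc hadj)
    · exact Or.inr ht.symm
  · rintro ⟨hadj, h1 | h1⟩
    · exact ⟨hadj, Or.inl ⟨self_mem_coneSet S g, adj_incr_mem_cone hadj h1⟩⟩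
    · exact ⟨hadj, Or.inr ⟨h1.symm, Or.inl (self_mem_coneSet S g)⟩⟩

lemma TI_mem_verts {g h : G} (hh : (extConeSubgraph S g).Adj g h) :
    h ∈ (extConeSubgraph S g).verts := hh.snd_mem

lemma TI_image (e : SE S g₁ g₂) :
    {h | (extConeSubgraph S g₂).Adj g₂ h} = e.F '' {h | (extConeSubgraph S g₁).Adj g₁ h} := by
  ext k
  constructor
  · intro hk
    have hkv : k ∈ (extConeSubgraph S g₂).verts := TI_mem_verts hk
    refine ⟨e.symm.F k, ?_, e.F_F_symm hkv⟩
    rw [e.symm.F_eq hkv]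
    show (extConeSubgraph S g₁).Adj g₁ (e.symm.f k hkv)
    have h1 := (e.symm.adj_iff (self_mem_extCone S g₂) hkv).mp hk
    rwa [e.symm.root'] at h1
  · rintro ⟨h, hh, rfl⟩
    have hhv : h ∈ (extConeSubgraph S g₁).verts := TI_mem_verts hh
    rw [e.F_eq hhv]
    show (extConeSubgraph S g₂).Adj g₂ (e.f h hhv)
    have h1 := (e.adj_iff (self_mem_extCone S g₁) hhv).mp hh
    rwa [e.root'] at h1

lemma mval_transfer (hgen : Subgroup.closure S = ⊤) (hS : S.Finite) (e : SE S g₁ g₂) :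
    mval S g₁ = mval S g₂ := by
  have key : ∀ g : G, mval S g = {h | (cayley S).Adj g h}.ncard -
      {h | (extConeSubgraph S g).Adj g h}.ncard := by
    intro g
    have hD : {h | (cayley S).Adj g h ∧ wordLength S g = wordLength S h + 1} =
        {h | (cayley S).Adj g h} \ {h | (extConeSubgraph S g).Adj g h} := by
      rw [TI_eq hgen g]
      ext h
      simp only [Set.mem_setOf_eq, Set.mem_diff, not_and, not_or]
      constructor
      · intro ⟨hadj, hw⟩
        exact ⟨hadj, fun _ => by omega⟩
      · intro ⟨hadj, hw⟩
        have h1 := wordLength_le_adj hgen hadj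
        have h2 := wordLength_le_adj hgen hadj.symm
        have h3 := hw hadj
        refine ⟨hadj, by omega⟩
    rw [mval, hD, Set.ncard_diff ?_ ?_]
    · rw [TI_eq hgen g]
      intro h hh
      exact hh.1
    · rw [TI_eq hgen g]
      exact (nbr_finite hS g).subset (fun h hh => hh.1)
  have h2 : {h | (extConeSubgraph S g₂).Adj g₂ h}.ncard =
      {h | (extConeSubgraph S g₁).Adj g₁ h}.ncard := by
    rw [TI_image e]
    exact Set.ncard_image_of_injOn (e.F_injOn (fun h hh => TI_mem_verts hh))
  rw [key g₁, key g₂, nbr_ncard g₁, nbr_ncard g₂, h2]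

end Counting

section Final

variable {S : Set G} {g₁ g₂ : G}

lemma incr_step (hgen : Subgroup.closure S = ⊤) (e : SE S g₁ g₂) (h' : G)
    (hadj : (cayley S).Adj g₁ h') (hwl : wordLength S h' = wordLength S g₁ + 1) :
    (cayley S).Adj g₂ (e.F h') ∧ wordLength S (e.F h') = wordLength S g₂ + 1 ∧
      Nonempty (SE S h' (e.F h')) := by
  have hc : h' ∈ coneSet S g₁ := adj_incr_mem_cone hadj hwl
  have hv : h' ∈ (extConeSubgraph S g₁).verts := Or.inl hc
  rw [e.F_eq hv]
  have he1 : (extConeSubgraph S g₁).Adj g₁ h' :=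
    ⟨hadj, Or.inl ⟨self_mem_coneSet S g₁, hc⟩⟩
  have he2 := (e.adj_iff (self_mem_extCone S g₁) hv).mp he1
  rw [e.root'] at he2
  have hadj2 : (cayley S).Adj g₂ (e.f h' hv) := he2.adj_sub
  have hc2 : e.f h' hv ∈ coneSet S g₂ := (e.cone_iff hv).mp hc
  exact ⟨hadj2, cone_adj_wl hc2 hadj2, se_restrict hgen e hadj hwl⟩

lemma nval_transfer (hgen : Subgroup.closure S = ⊤) (e : SE S g₁ g₂) {h₁ h₂ : G}
    (ehh : SE S h₁ h₂) : nval S g₁ h₁ = nval S g₂ h₂ := by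
  have himg : {h' | (cayley S).Adj g₂ h' ∧ wordLength S h' = wordLength S g₂ + 1 ∧
      StrongEquiv S h' h₂} = e.F '' {h' | (cayley S).Adj g₁ h' ∧
      wordLength S h' = wordLength S g₁ + 1 ∧ StrongEquiv S h' h₁} := by
    ext k
    constructor
    · rintro ⟨hadj2, hwl2, hse2⟩
      obtain ⟨hadjb, hwlb, ⟨er⟩⟩ := incr_step hgen e.symm k hadj2 hwl2
      refine ⟨e.symm.F k, ⟨hadjb, hwlb, ?_⟩,
        e.F_F_symm (Or.inl (adj_incr_mem_cone hadj2 hwl2))⟩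
      exact strongEquiv_nonempty.mpr
        ⟨er.symm.trans ((strongEquiv_nonempty.mp hse2).some.trans ehh.symm)⟩
    · rintro ⟨h', ⟨hadj1, hwl1, hse1⟩, rfl⟩
      obtain ⟨hadjb, hwlb, ⟨er⟩⟩ := incr_step hgen e h' hadj1 hwl1
      exact ⟨hadjb, hwlb, strongEquiv_nonempty.mpr
        ⟨er.symm.trans ((strongEquiv_nonempty.mp hse1).some.trans ehh)⟩⟩
  rw [nval, nval, himg, Set.ncard_image_of_injOn
    (e.F_injOn (fun h' hh' => Or.inl (adj_incr_mem_cone hh'.1 hh'.2.1)))]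

end Final

/-- The values `m(C̄(g))` and `n(C̄(g),C̄(h))` are invariant under strong equivalence
of extended cones. -/
theorem mval_nval_invariant (S : Set G) (hS : S.Finite) (hgen : Subgroup.closure S = ⊤)
    (g₁ g₂ h₁ h₂ : G) (hg : StrongEquiv S g₁ g₂) (hh : StrongEquiv S h₁ h₂) :
    mval S g₁ = mval S g₂ ∧ nval S g₁ h₁ = nval S g₂ h₂ := by
  obtain ⟨eg⟩ := strongEquiv_nonempty.mp hg
  obtain ⟨eh⟩ := strongEquiv_nonempty.mp hh
  exact ⟨mval_transfer hgen hS eg, nval_transfer hgen eg eh⟩
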